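/- If G is a connected graph on n vertices with diam(G) = 2, then Γρ(G) = n − i(G) + 1. -/

import Mathlib

open SimpleGraph

/-- A packing `k`-coloring of `G`: colors in `{1,…,k}` and vertices of equal color `i`
are at distance greater than `i` (vertices in different components are unconstrained). -/
def IsPackingColoring {V : Type*} (G : SimpleGraph V) (k : ℕ) (c : V → ℕ) : Prop :=
  (∀ v, 1 ≤ c v ∧ c v ≤ k) ∧
  ∀ u v, u ≠ v → c u = c v → G.Reachable u v → c u < G.dist u v

/-- A greedy packing `k`-coloring: a packing `k`-coloring that uses color `k` and in which
every vertex of color `i ≥ 2` has, for every `j < i`, a vertex of color `j`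
at distance at most `j`. -/
def IsGreedyPackingColoring {V : Type*} (G : SimpleGraph V) (k : ℕ) (c : V → ℕ) : Prop :=
  IsPackingColoring G k c ∧ (∃ v, c v = k) ∧
  ∀ v, ∀ j, 1 ≤ j → j < c v → ∃ u, c u = j ∧ G.Reachable u v ∧ G.dist u v ≤ j

/-- The Grundy packing chromatic number: the largest `k` admitting a greedy packing
`k`-coloring. -/
noncomputable def grundyPackingChromaticNumber {V : Type*} (G : SimpleGraph V) : ℕ :=
  sSup {k | ∃ c : V → ℕ, IsGreedyPackingColoring G k c}

/-- The packing chromatic number: the smallest `k` admitting a packing `k`-coloring. -/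
noncomputable def packingChromaticNumber {V : Type*} (G : SimpleGraph V) : ℕ :=
  sInf {k | ∃ c : V → ℕ, IsPackingColoring G k c}

/-- `s` is an independent set of `G`. -/
def IsIndepFinset {V : Type*} (G : SimpleGraph V) (s : Finset V) : Prop :=
  ∀ u ∈ s, ∀ v ∈ s, ¬ G.Adj u v

/-- `s` is a maximal independent set of `G`. -/
def IsMaxIndepFinset {V : Type*} (G : SimpleGraph V) (s : Finset V) : Prop :=
  IsIndepFinset G s ∧ ∀ t : Finset V, IsIndepFinset G t → s ⊆ t → s = t

/-- The independent domination number `i(G)`: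
the minimum cardinality of a maximal independent set. -/
noncomputable def indepDomNum {V : Type*} (G : SimpleGraph V) [Fintype V] : ℕ :=
  sInf {n | ∃ s : Finset V, IsMaxIndepFinset G s ∧ s.card = n}

/-- The graph `G^ℓ`: same vertices, `u ∼ v` iff `u ≠ v` and `d_G(u,v) ≤ ℓ`. -/
def distPow {V : Type*} (G : SimpleGraph V) (ℓ : ℕ) : SimpleGraph V where
  Adj u v := u ≠ v ∧ G.dist u v ≤ ℓ
  symm := by
    constructor
    rintro u v ⟨h1, h2⟩
    exact ⟨h1.symm, by rwa [SimpleGraph.dist_comm]⟩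
  loopless := by constructor; rintro v ⟨h, _⟩; exact h rfl

/-- The graph `G(k)`: vertex set is `k` disjoint copies of `V(G)`, the copy `i : Fin k`
playing the role of `G^(i+1)`; the `k` copies of each vertex form a clique, and within the
`i`-th copy two distinct vertices are adjacent iff their distance in `G` is at most `i+1`. -/
def levelGraph {V : Type*} (G : SimpleGraph V) (k : ℕ) : SimpleGraph (V × Fin k) where
  Adj p q := (p.1 = q.1 ∧ p.2 ≠ q.2) ∨
    (p.1 ≠ q.1 ∧ p.2 = q.2 ∧ G.dist p.1 q.1 ≤ (p.2 : ℕ) + 1)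
  symm := by
    constructor
    rintro p q (⟨h1, h2⟩ | ⟨h1, h2, h3⟩)
    · exact Or.inl ⟨h1.symm, h2.symm⟩
    · refine Or.inr ⟨h1.symm, h2.symm, ?_⟩
      rw [SimpleGraph.dist_comm, ← h2]
      exact h3
  loopless := by constructor; rintro p (⟨_, h⟩ | ⟨h, _, _⟩) <;> exact h rfl

/-- `A` is a maximal independent set of the subgraph of `H` induced on `S`. -/
def IsMaxIndepSetOn {V : Type*} (H : SimpleGraph V) (S : Set V) (A : Set V) : Prop :=
  A ⊆ S ∧ (∀ u ∈ A, ∀ v ∈ A, ¬ H.Adj u v) ∧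
  ∀ B : Set V, B ⊆ S → (∀ u ∈ B, ∀ v ∈ B, ¬ H.Adj u v) → A ⊆ B → A = B

/-- The eccentricity of a vertex. -/
noncomputable def eccent {V : Type*} (G : SimpleGraph V) [Fintype V] (v : V) : ℕ :=
  Finset.univ.sup (fun u => G.dist v u)

/-- The radius of a graph. -/
noncomputable def graphRadius {V : Type*} (G : SimpleGraph V) [Fintype V] : ℕ :=
  sInf (Set.range (eccent G))

/-- The diameter of a graph. -/
noncomputable def graphDiam {V : Type*} (G : SimpleGraph V) [Fintype V] : ℕ :=
  Finset.univ.sup (eccent G)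

/-- The diametrical graph `D(G)`: `x ∼ y` iff `d_G(x,y) = diam(G)`. -/
noncomputable def diamGraph {V : Type*} (G : SimpleGraph V) [Fintype V] : SimpleGraph V where
  Adj u v := u ≠ v ∧ G.dist u v = graphDiam G
  symm := by
    constructor
    rintro u v ⟨h1, h2⟩
    exact ⟨h1.symm, by rwa [SimpleGraph.dist_comm]⟩
  loopless := by constructor; rintro v ⟨h, _⟩; exact h rfl

/-- `Q` is a clique of the subgraph of `H` induced on `S`. -/
def IsCliqueFinsetOn {V : Type*} (H : SimpleGraph V) (S : Set V) (Q : Finset V) : Prop :=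
  ↑Q ⊆ S ∧ ∀ u ∈ Q, ∀ v ∈ Q, u ≠ v → H.Adj u v

/-- `Q` is a maximal clique of the subgraph of `H` induced on `S`. -/
def IsMaxCliqueFinsetOn {V : Type*} (H : SimpleGraph V) (S : Set V) (Q : Finset V) : Prop :=
  IsCliqueFinsetOn H S Q ∧ ∀ R : Finset V, IsCliqueFinsetOn H S R → Q ⊆ R → Q = R

/-- The join `G ∨ H` of two graphs. -/
def joinGraph {V W : Type*} (G : SimpleGraph V) (H : SimpleGraph W) :
    SimpleGraph (V ⊕ W) where
  Adj p q := match p, q with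
    | .inl u, .inl v => G.Adj u v
    | .inr u, .inr v => H.Adj u v
    | .inl _, .inr _ => True
    | .inr _, .inl _ => True
  symm := by
    constructor
    rintro (u | u) (v | v) h
    · exact G.adj_symm h
    · trivial
    · trivial
    · exact H.adj_symm h
  loopless := by
    constructor
    rintro (u | u) h
    · exact G.irrefl h
    · exact H.irrefl h

/-- `K_{n,n}` minus a perfect matching: parts `{u_i}` and `{v_i}`, with `u_i ∼ v_j` iff
`i ≠ j`. -/
def completeBipartiteMinusMatching (n : ℕ) : SimpleGraph (Fin n ⊕ Fin n) where
  Adj p q := match p, q with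
    | .inl i, .inr j => i ≠ j
    | .inr i, .inl j => i ≠ j
    | _, _ => False
  symm := by constructor; rintro (i | i) (j | j) h <;> first | exact h.symm | exact h
  loopless := by constructor; rintro (i | i) h <;> exact h



section Aux
variable {V : Type*} [Fintype V] (G : SimpleGraph V)

lemma dist_le_graphDiam (u v : V) : G.dist u v ≤ graphDiam G := by
  calc G.dist u v ≤ _root_.eccent G u := Finset.le_sup (f := fun w => G.dist u w) (Finset.mem_univ v)
    _ ≤ graphDiam G := Finset.le_sup (Finset.mem_univ u)

lemma exists_maxIndepFinset : ∃ s : Finset V, IsMaxIndepFinset G s := by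
  classical
  obtain ⟨s, hs, hmax⟩ := Finset.exists_max_image
    (Finset.univ.filter (fun s : Finset V => IsIndepFinset G s)) Finset.card
    ⟨∅, Finset.mem_filter.2 ⟨Finset.mem_univ _, by simp [IsIndepFinset]⟩⟩
  simp only [Finset.mem_filter] at hs hmax
  refine ⟨s, hs.2, fun t ht hst => Finset.eq_of_subset_of_card_le hst ?_⟩
  exact hmax t ⟨Finset.mem_univ t, ht⟩

lemma exists_indepDomNum_witness :
    ∃ s : Finset V, IsMaxIndepFinset G s ∧ s.card = indepDomNum G := by
  obtain ⟨s, hs⟩ := exists_maxIndepFinset G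
  have : indepDomNum G ∈ {n | ∃ s : Finset V, IsMaxIndepFinset G s ∧ s.card = n} :=
    Nat.sInf_mem ⟨s.card, s, hs, rfl⟩
  exact this

lemma nonempty_of_diam_two (hd : graphDiam G = 2) : Nonempty V := by
  by_contra h
  rw [not_nonempty_iff] at h
  have : graphDiam G = 0 := by
    simp [graphDiam, Finset.univ_eq_empty]
  omega

/-- Upper bound: any greedy packing k-coloring has k ≤ n - i(G) + 1. -/
lemma greedy_le_bound (hG : G.Connected) (hd : graphDiam G = 2)
    {k : ℕ} {c : V → ℕ} (hc : IsGreedyPackingColoring G k c) :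
    k ≤ Fintype.card V - indepDomNum G + 1 := by
  classical
  obtain ⟨⟨hrange, hpack⟩, ⟨vk, hvk⟩, hgreedy⟩ := hc
  set S : Finset V := Finset.univ.filter (fun v => c v = 1) with hS
  have hmemS : ∀ v, v ∈ S ↔ c v = 1 := by intro v; simp [hS]
  -- S is a maximal independent set
  have hSindep : IsIndepFinset G S := by
    intro u hu v hv hadj
    have huv : u ≠ v := G.ne_of_adj hadj
    have h1 : c u < G.dist u v :=
      hpack u v huv (((hmemS u).1 hu).trans ((hmemS v).1 hv).symm) hadj.reachable
    rw [SimpleGraph.dist_eq_one_iff_adj.2 hadj, (hmemS u).1 hu] at h1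
    omega
  have hSmax : IsMaxIndepFinset G S := by
    refine ⟨hSindep, fun t ht hst => ?_⟩
    refine Finset.Subset.antisymm hst (fun v hv => ?_)
    by_contra hvS
    have hcv : 2 ≤ c v := by
      have h1 := (hrange v).1
      have : c v ≠ 1 := fun h => hvS ((hmemS v).2 h)
      omega
    obtain ⟨u, hu1, _, hud⟩ := hgreedy v 1 le_rfl hcv
    have huv : u ≠ v := by intro h; have : c v = 1 := h ▸ hu1; omega
    have hupos : 1 ≤ G.dist u v := (hG u v).pos_dist_of_ne huv
    have hadj : G.Adj u v := SimpleGraph.dist_eq_one_iff_adj.1 (le_antisymm hud hupos)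
    exact ht u (hst ((hmemS u).2 hu1)) v hv hadj
  have hiS : indepDomNum G ≤ S.card := Nat.sInf_le ⟨S, hSmax, rfl⟩
  -- every color j with 2 ≤ j ≤ k is used
  have hall : ∀ j ∈ Finset.Icc 2 k, ∃ u, c u = j := by
    intro j hj
    rw [Finset.mem_Icc] at hj
    rcases eq_or_lt_of_le hj.2 with h | h
    · exact ⟨vk, by omega⟩
    · obtain ⟨u, hu, _⟩ := hgreedy vk j (by omega) (by omega)
      exact ⟨u, hu⟩
  -- injection from colors 2..k into V \ S
  have hk1 : k - 1 ≤ (Finset.univ.filter (fun v => ¬ c v = 1)).card := by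
    have := Finset.card_le_card_of_injOn
      (f := fun j => if h : ∃ u, c u = j then h.choose else vk)
      (s := Finset.Icc 2 k) (t := Finset.univ.filter (fun v => ¬ c v = 1))
      (fun j hj => by
        show (if h : ∃ u, c u = j then h.choose else vk) ∈ _
        rw [dif_pos (hall j hj)]
        have := (hall j hj).choose_spec
        rw [Finset.mem_coe, Finset.mem_Icc] at hj
        simp only [Finset.mem_coe, Finset.mem_filter, Finset.mem_univ, true_and]
        omega)
      (fun a ha b hb hab => by
        have hab' : (if h : ∃ u, c u = a then h.choose else vk)
            = (if h : ∃ u, c u = b then h.choose else vk) := hab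
        rw [dif_pos (hall a ha), dif_pos (hall b hb)] at hab'
        have h1 := (hall a ha).choose_spec
        have h2 := (hall b hb).choose_spec
        rw [← h1, ← h2, hab'])
    rwa [Nat.card_Icc] at this
    
  have hsplit : S.card + (Finset.univ.filter (fun v => ¬ c v = 1)).card = Fintype.card V := by
    simpa [hS] using Finset.card_filter_add_card_filter_not
      (s := (Finset.univ : Finset V)) (p := fun v => c v = 1)
  have hk : 1 ≤ k := by
    have := (hrange vk).1
    have := (hrange vk).2
    omega
  omega

end Aux

/-- If `G` is connected with `diam(G) = 2`, then `Γρ(G) = n - i(G) + 1`. -/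
theorem grundyPackingChromaticNumber_of_diam_two {V : Type*} [Fintype V]
    (G : SimpleGraph V) (hG : G.Connected) (hd : graphDiam G = 2) :
    grundyPackingChromaticNumber G = Fintype.card V - indepDomNum G + 1 := by
  classical
  have hne : Nonempty V := nonempty_of_diam_two G hd
  obtain ⟨S, hSmax, hScard⟩ := exists_indepDomNum_witness G
  set T : Finset V := Sᶜ with hT
  have hSlecard : S.card ≤ Fintype.card V := Finset.card_le_univ S
  have hTcard : T.card = Fintype.card V - S.card := Finset.card_compl S
  -- T is nonempty: otherwise V is independent, contradicting diam = 2
  have hTne : T.Nonempty := by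
    rw [Finset.nonempty_iff_ne_empty]
    intro h
    have hSuniv : S = Finset.univ := by
      rwa [Finset.compl_eq_empty_iff] at h
    -- find an edge
    obtain ⟨v, -, hv⟩ := Finset.exists_mem_eq_sup (Finset.univ : Finset V)
      (Finset.univ_nonempty) (_root_.eccent G)
    obtain ⟨u, -, hu⟩ := Finset.exists_mem_eq_sup (Finset.univ : Finset V)
      (Finset.univ_nonempty) (fun w => G.dist v w)
    have hdvu : G.dist v u = 2 := by
      have h2 : _root_.eccent G v = 2 := by rw [← hv]; exact hd
      have h3 : Finset.univ.sup (fun w => G.dist v w) = 2 := h2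
      rw [← hu]; exact h3

    have hvu : v ≠ u := by
      intro h; rw [h, SimpleGraph.dist_self] at hdvu; omega
    obtain ⟨p⟩ := hG.preconnected v u
    cases p with
    | nil => exact hvu rfl
    | cons hadj q =>
      exact hSmax.1 v (hSuniv ▸ Finset.mem_univ v) _ (hSuniv ▸ Finset.mem_univ _) hadj
  set k : ℕ := T.card + 1 with hk
  have hdist2 : ∀ u v : V, G.dist u v ≤ 2 := fun u v => hd ▸ dist_le_graphDiam G u v
  -- define the coloring
  set c : V → ℕ := fun v => if h : v ∈ T then (T.equivFin ⟨v, h⟩ : ℕ) + 2 else 1 with hc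
  have hcS : ∀ v ∈ S, c v = 1 := by
    intro v hv
    have : v ∉ T := by simp [hT, hv]
    simp [hc, this]
  have hcT : ∀ v, (h : v ∈ T) → c v = (T.equivFin ⟨v, h⟩ : ℕ) + 2 := by
    intro v h; simp [hc, h]
  have hvS : ∀ v, v ∉ T → v ∈ S := by
    intro v hv; simpa [hT] using hv
  have hgreedy : IsGreedyPackingColoring G k c := by
    refine ⟨⟨?_, ?_⟩, ?_, ?_⟩
    · intro v
      by_cases h : v ∈ T
      · rw [hcT v h]
        have := (T.equivFin ⟨v, h⟩).2
        omega
      · have : c v = 1 := hcS v (hvS v h)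
        omega
    · intro u v huv hcuv _
      by_cases hu : u ∈ T
      · by_cases hv : v ∈ T
        · exfalso
          rw [hcT u hu, hcT v hv] at hcuv
          have : T.equivFin ⟨u, hu⟩ = T.equivFin ⟨v, hv⟩ := by
            apply Fin.ext; omega
          have := T.equivFin.injective this
          exact huv (congrArg Subtype.val this)
        · exfalso
          rw [hcT u hu, hcS v (hvS v hv)] at hcuv; omega
      · by_cases hv : v ∈ T
        · exfalso
          rw [hcS u (hvS u hu), hcT v hv] at hcuv; omega
        · -- both in S: independent so not adjacent
          rw [hcS u (hvS u hu)]
          have hne' : ¬ G.Adj u v := hSmax.1 u (hvS u hu) v (hvS v hv)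
          have hpos : 1 ≤ G.dist u v := (hG u v).pos_dist_of_ne huv
          have : G.dist u v ≠ 1 := fun h => hne' (SimpleGraph.dist_eq_one_iff_adj.1 h)
          omega
    · -- color k used
      obtain ⟨j, hj⟩ : ∃ j : Fin T.card, True := ⟨⟨T.card - 1, by
        have := Finset.card_pos.2 hTne; omega⟩, trivial⟩
      refine ⟨(T.equivFin.symm ⟨T.card - 1, by have := Finset.card_pos.2 hTne; omega⟩ : {x // x ∈ T}).1, ?_⟩
      set x := T.equivFin.symm ⟨T.card - 1, by have := Finset.card_pos.2 hTne; omega⟩ with hx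
      have hxm : (x : V) ∈ T := x.2
      rw [hcT _ hxm]
      have hxx : (⟨(x : V), hxm⟩ : {a // a ∈ T}) = x := Subtype.ext rfl
      rw [hxx, hx, Equiv.apply_symm_apply]
      have := Finset.card_pos.2 hTne
      simp only [hk]
      omega
    · -- greedy property
      intro v j hj1 hjv
      have hvT : v ∈ T := by
        by_contra h
        rw [hcS v (hvS v h)] at hjv; omega
      rcases eq_or_lt_of_le hj1 with h1 | h2
      · -- j = 1: dominating
        have hnotindep : ¬ IsIndepFinset G (insert v S) := by
          intro hind
          have heq := hSmax.2 (insert v S) hind (Finset.subset_insert v S)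
          have hvin : v ∈ S := by rw [heq]; exact Finset.mem_insert_self v S
          exact (Finset.mem_compl.1 (hT ▸ hvT)) hvin
        simp only [IsIndepFinset, not_forall, not_not] at hnotindep
        obtain ⟨a, ha, b, hb, hadj⟩ := hnotindep
        rw [Finset.mem_insert] at ha hb
        have hvnS : v ∉ S := by
          intro h; simp [hT, h] at hvT
        rcases ha with ha | ha <;> rcases hb with hb | hb
        · subst ha; subst hb; exact (G.irrefl hadj).elim
        · subst ha
          refine ⟨b, by rw [← h1]; exact hcS b hb, hadj.symm.reachable, ?_⟩
          rw [SimpleGraph.dist_eq_one_iff_adj.2 hadj.symm]; omega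
        · subst hb
          refine ⟨a, by rw [← h1]; exact hcS a ha, hadj.reachable, ?_⟩
          rw [SimpleGraph.dist_eq_one_iff_adj.2 hadj]; omega
        · exact absurd hadj (hSmax.1 a ha b hb)
      · -- j ≥ 2: use the vertex colored j; distance ≤ 2 ≤ j
        have hcvk : c v ≤ k := by
          rw [hcT v hvT]
          have := (T.equivFin ⟨v, hvT⟩).2
          omega
        have hjT : j - 2 < T.card := by omega
        set u := (T.equivFin.symm ⟨j - 2, hjT⟩ : {x // x ∈ T}).1 with hu
        have hum : u ∈ T := (T.equivFin.symm ⟨j - 2, hjT⟩).2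
        have hcu : c u = j := by
          rw [hcT u hum]
          have hxx : (⟨u, hum⟩ : {a // a ∈ T}) = T.equivFin.symm ⟨j - 2, hjT⟩ :=
            Subtype.ext rfl
          rw [hxx, Equiv.apply_symm_apply]; simp only [Fin.val_mk]; omega
        exact ⟨u, hcu, hG.preconnected u v, le_trans (hdist2 u v) (by omega)⟩
  -- conclude
  have hmem : k ∈ {k | ∃ c : V → ℕ, IsGreedyPackingColoring G k c} := ⟨c, hgreedy⟩
  have hub : ∀ m ∈ {k | ∃ c : V → ℕ, IsGreedyPackingColoring G k c},
      m ≤ Fintype.card V - indepDomNum G + 1 := by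
    rintro m ⟨c', hc'⟩
    exact greedy_le_bound G hG hd hc'
  have hkval : k = Fintype.card V - indepDomNum G + 1 := by
    rw [hk, hTcard, hScard]
  rw [grundyPackingChromaticNumber]
  refine le_antisymm (csSup_le ⟨k, hmem⟩ hub) ?_
  rw [← hkval]
  exact le_csSup ⟨Fintype.card V - indepDomNum G + 1, hub⟩ hmem
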